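/- Let A ∈ ℝ^{n×n} be symmetric with distinct eigenvalues, B ∈ ℝ^{n×m}, D ∈ ℝ^{m×m} symmetric positive definite. Suppose the minimum gap between consecutive eigenvalues of A exceeds λ_max(B D^{-1} Bᵀ), and that Bᵀx ≠ 0 for every eigenvector x of A. Then the eigenvalues of A and of A − B D^{-1} Bᵀ strictly interlace: λ_i(A − BD^{-1}Bᵀ) < λ_i(A) < λ_{i+1}(A − BD^{-1}Bᵀ) for i = 1,…,n−1 (and λ_n(A−BD^{-1}Bᵀ) < λ_n(A)). In particular the eigenvalues of A − BD^{-1}Bᵀ are distinct. -/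

import Mathlib

open Matrix Polynomial

lemma exists_comp_equiv {α β : Type*} [Fintype α] [DecidableEq β] (f g : α → β)
    (h : Finset.univ.val.map f = Finset.univ.val.map g) : ∃ e : Equiv.Perm α, f = g ∘ e := by
  classical
  have hcard : ∀ b : β, Fintype.card {a // b = f a} = Fintype.card {a // b = g a} := by
    intro b
    have hcount := congrArg (Multiset.count b) h
    rw [Multiset.count_map, Multiset.count_map, ← Finset.filter_val, ← Finset.filter_val,
      Finset.card_val, Finset.card_val] at hcount
    rw [Fintype.card_subtype, Fintype.card_subtype]
    exact hcount
  let ψ : ∀ b, {a // f a = b} ≃ {a // g a = b} := fun b =>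
    ((Equiv.subtypeEquivRight (fun a => eq_comm)).trans (Fintype.equivOfCardEq (hcard b))).trans
      (Equiv.subtypeEquivRight (fun a => eq_comm))
  let e : Equiv.Perm α := (Equiv.sigmaFiberEquiv f).symm.trans
    ((Equiv.sigmaCongrRight ψ).trans (Equiv.sigmaFiberEquiv g))
  exact ⟨e, funext fun a => ((ψ (f a) ⟨a, rfl⟩).2).symm⟩

lemma charpoly_conj' {N : ℕ} (U D V : Matrix (Fin N) (Fin N) ℝ) (hUV : U * V = 1)
    (hVU : V * U = 1) : (U * D * V).charpoly = D.charpoly := by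
  have hmap : ∀ M : Matrix (Fin N) (Fin N) ℝ,
      charmatrix M = (X : ℝ[X]) • (1 : Matrix (Fin N) (Fin N) ℝ[X]) - M.map C := by
    intro M
    ext i j
    rw [charmatrix_apply]
    by_cases h : i = j <;>
      simp [h, Matrix.diagonal_apply, Matrix.one_apply, Matrix.map_apply]
  have key : charmatrix (U * D * V) = U.map C * charmatrix D * V.map C := by
    rw [hmap, hmap, Matrix.mul_sub, Matrix.sub_mul]
    congr 1
    · rw [Matrix.mul_smul, Matrix.mul_one, Matrix.smul_mul, ← Matrix.map_mul, hUV,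
        Matrix.map_one ⇑C (map_zero C) (map_one C)]
    · rw [← Matrix.map_mul, ← Matrix.map_mul]
  rw [Matrix.charpoly, Matrix.charpoly, key, Matrix.det_mul, Matrix.det_mul]
  have : U.map ⇑C * V.map ⇑C = 1 := by
    rw [← Matrix.map_mul, hUV, Matrix.map_one ⇑C (map_zero C) (map_one C)]
  calc (U.map ⇑C).det * (charmatrix D).det * (V.map ⇑C).det
      = (U.map ⇑C).det * (V.map ⇑C).det * (charmatrix D).det := by ring
    _ = (charmatrix D).det := by rw [← Matrix.det_mul, this]; simp

lemma charpoly_diag {N : ℕ} (d : Fin N → ℝ) :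
    (Matrix.diagonal d).charpoly = ∏ i, (X - C (d i)) := by
  rw [Matrix.charpoly]
  have : charmatrix (Matrix.diagonal d) = Matrix.diagonal fun i => (X : ℝ[X]) - C (d i) := by
    ext i j
    rw [charmatrix_apply]
    by_cases h : i = j <;> simp [h, Matrix.diagonal_apply]
  rw [this, Matrix.det_diagonal]

lemma exists_eig {N : ℕ} (S : Matrix (Fin N) (Fin N) ℝ) (hS : S.IsSymm)
    (l : Fin N → ℝ) (hc : S.charpoly = ∏ i, (X - C (l i))) :
    ∃ u : Fin N → (Fin N → ℝ),
      (∀ i j, u i ⬝ᵥ u j = if i = j then 1 else 0) ∧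
      (∀ i, S *ᵥ u i = l i • u i) ∧
      (∀ x : Fin N → ℝ, x = ∑ k, (u k ⬝ᵥ x) • u k) := by
  classical
  have hH : S.IsHermitian := by
    rwa [Matrix.IsHermitian, Matrix.conjTranspose_eq_transpose_of_trivial]
  -- charpoly S = ∏ (X - C (eigenvalues i))
  have h1 : S.charpoly = ∏ i, (X - C (hH.eigenvalues i)) := by
    conv_lhs => rw [hH.spectral_theorem, Unitary.conjStarAlgAut_apply]
    rw [charpoly_conj' _ _ _ (Matrix.mem_unitaryGroup_iff.mp (hH.eigenvectorUnitary).2)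
      (Matrix.mem_unitaryGroup_iff'.mp (hH.eigenvectorUnitary).2)]
    have : Matrix.diagonal (RCLike.ofReal ∘ hH.eigenvalues) = Matrix.diagonal hH.eigenvalues := by
      rfl
    rw [this, charpoly_diag]
  -- multiset equality of roots
  have h2 : Finset.univ.val.map l = Finset.univ.val.map hH.eigenvalues := by
    have h3 : (∏ i, (X - C (l i))) = ∏ i, (X - C (hH.eigenvalues i)) := by rw [← hc, h1]
    have hr : ∀ f : Fin N → ℝ, (∏ i, (X - C (f i))).roots = Finset.univ.val.map f := by
      intro f
      have hcomp : (fun i => X - C (f i)) = (fun a => X - C a) ∘ f := rfl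
      rw [Finset.prod_eq_multiset_prod, hcomp, ← Multiset.map_map]
      exact roots_multiset_prod_X_sub_C _
    rw [← hr l, ← hr hH.eigenvalues, h3]
  obtain ⟨e, he⟩ := exists_comp_equiv l hH.eigenvalues h2
  set b := hH.eigenvectorBasis.reindex e.symm with hb
  refine ⟨fun i => b i, ?_, ?_, ?_⟩
  · intro i j
    have := orthonormal_iff_ite.mp b.orthonormal i j
    rw [← this]
    simp [PiLp.inner_apply, RCLike.inner_apply, dotProduct, mul_comm]
  · intro i
    have := hH.mulVec_eigenvectorBasis (e i)
    rw [hb]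
    simpa [OrthonormalBasis.reindex_apply, he] using this
  · intro x
    have hx := congrArg WithLp.ofLp (b.sum_repr (WithLp.toLp 2 x))
    simp only [WithLp.ofLp_sum, WithLp.ofLp_smul] at hx
    conv_lhs => rw [← hx]
    refine Finset.sum_congr rfl fun k _ => ?_
    rw [b.repr_apply_apply]
    simp [PiLp.inner_apply, dotProduct, mul_comm]

section
variable {N : ℕ} {S : Matrix (Fin N) (Fin N) ℝ} {u : Fin N → Fin N → ℝ} {l : Fin N → ℝ}

lemma dot_expand (hcomp : ∀ x : Fin N → ℝ, x = ∑ k, (u k ⬝ᵥ x) • u k) (x y : Fin N → ℝ) :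
    x ⬝ᵥ y = ∑ k, (u k ⬝ᵥ x) * (u k ⬝ᵥ y) := by
  have key : ∀ (c : Fin N → ℝ) (y : Fin N → ℝ),
      (∑ k, c k • u k) ⬝ᵥ y = ∑ k, c k * (u k ⬝ᵥ y) := by
    intro c y
    simp only [dotProduct, Finset.sum_apply, Pi.smul_apply, smul_eq_mul, Finset.mul_sum]
    rw [Finset.sum_comm]
    exact Finset.sum_congr rfl fun k _ => by
      rw [Finset.sum_mul]; exact Finset.sum_congr rfl fun i _ => by ring
  conv_lhs => rw [hcomp x]
  exact key _ y

lemma qform_eq (hS : S.IsSymm) (heig : ∀ i, S *ᵥ u i = l i • u i)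
    (hcomp : ∀ x : Fin N → ℝ, x = ∑ k, (u k ⬝ᵥ x) • u k) (x : Fin N → ℝ) :
    x ⬝ᵥ (S *ᵥ x) = ∑ k, l k * (u k ⬝ᵥ x) ^ 2 := by
  rw [dot_expand hcomp]
  refine Finset.sum_congr rfl fun k _ => ?_
  have h1 : u k ⬝ᵥ (S *ᵥ x) = (S *ᵥ u k) ⬝ᵥ x := by
    rw [Matrix.dotProduct_mulVec, ← Matrix.mulVec_transpose, hS.eq]
  rw [h1, heig k, smul_dotProduct, smul_eq_mul]
  ring

lemma norm_expand (hcomp : ∀ x : Fin N → ℝ, x = ∑ k, (u k ⬝ᵥ x) • u k) (x : Fin N → ℝ) :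
    x ⬝ᵥ x = ∑ k, (u k ⬝ᵥ x) ^ 2 := by
  rw [dot_expand hcomp]
  exact Finset.sum_congr rfl fun k _ => (sq (u k ⬝ᵥ x)).symm

lemma qform_le (hS : S.IsSymm) (heig : ∀ i, S *ᵥ u i = l i • u i)
    (hcomp : ∀ x : Fin N → ℝ, x = ∑ k, (u k ⬝ᵥ x) • u k) (x : Fin N → ℝ) (c : ℝ)
    (p : Fin N → Prop) [DecidablePred p] (hl : ∀ k, p k → l k ≤ c)
    (hv : ∀ k, ¬ p k → u k ⬝ᵥ x = 0) : x ⬝ᵥ (S *ᵥ x) ≤ c * (x ⬝ᵥ x) := by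
  rw [qform_eq hS heig hcomp, norm_expand hcomp, Finset.mul_sum]
  refine Finset.sum_le_sum fun k _ => ?_
  by_cases hk : p k
  · exact mul_le_mul_of_nonneg_right (hl k hk) (sq_nonneg _)
  · rw [hv k hk]; simp

lemma qform_ge (hS : S.IsSymm) (heig : ∀ i, S *ᵥ u i = l i • u i)
    (hcomp : ∀ x : Fin N → ℝ, x = ∑ k, (u k ⬝ᵥ x) • u k) (x : Fin N → ℝ) (c : ℝ)
    (p : Fin N → Prop) [DecidablePred p] (hl : ∀ k, p k → c ≤ l k)
    (hv : ∀ k, ¬ p k → u k ⬝ᵥ x = 0) : c * (x ⬝ᵥ x) ≤ x ⬝ᵥ (S *ᵥ x) := by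
  rw [qform_eq hS heig hcomp, norm_expand hcomp, Finset.mul_sum]
  refine Finset.sum_le_sum fun k _ => ?_
  by_cases hk : p k
  · exact mul_le_mul_of_nonneg_right (hl k hk) (sq_nonneg _)
  · rw [hv k hk]; simp

lemma qform_eq_eigen (hS : S.IsSymm) (heig : ∀ i, S *ᵥ u i = l i • u i)
    (hcomp : ∀ x : Fin N → ℝ, x = ∑ k, (u k ⬝ᵥ x) • u k) (x : Fin N → ℝ) (j : Fin N)
    (hother : ∀ k, k ≠ j → (u k ⬝ᵥ x = 0 ∨ l k < l j))
    (heq : x ⬝ᵥ (S *ᵥ x) = l j * (x ⬝ᵥ x)) : S *ᵥ x = l j • x := by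
  have hsum : ∑ k, (l j - l k) * (u k ⬝ᵥ x) ^ 2 = 0 := by
    have h1 := qform_eq hS heig hcomp x
    have h2 := norm_expand hcomp x
    rw [h1, h2, Finset.mul_sum] at heq
    have h3 : ∑ k, (l j - l k) * (u k ⬝ᵥ x) ^ 2
        = ∑ k, (l j * (u k ⬝ᵥ x) ^ 2 - l k * (u k ⬝ᵥ x) ^ 2) :=
      Finset.sum_congr rfl fun k _ => by ring
    rw [h3, Finset.sum_sub_distrib, ← heq, sub_self]
  have hnn : ∀ k ∈ Finset.univ, 0 ≤ (l j - l k) * (u k ⬝ᵥ x) ^ 2 := by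
    intro k _
    by_cases hk : k = j
    · subst hk; simp
    · rcases hother k hk with h | h
      · rw [h]; simp
      · exact mul_nonneg (by linarith) (sq_nonneg _)
  have hzero : ∀ k, k ≠ j → u k ⬝ᵥ x = 0 := by
    intro k hk
    rcases hother k hk with h | h
    · exact h
    · have := (Finset.sum_eq_zero_iff_of_nonneg hnn).mp hsum k (Finset.mem_univ k)
      have h2 : (u k ⬝ᵥ x) ^ 2 = 0 := by
        by_contra h3
        have := mul_ne_zero (by linarith : l j - l k ≠ 0) h3
        exact this ‹(l j - l k) * (u k ⬝ᵥ x) ^ 2 = 0›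
      exact pow_eq_zero_iff (two_ne_zero) |>.mp h2
  have hx : x = (u j ⬝ᵥ x) • u j := by
    conv_lhs => rw [hcomp x]
    rw [Finset.sum_eq_single j]
    · intro k _ hk; rw [hzero k hk]; simp
    · intro h; exact absurd (Finset.mem_univ j) h
  conv_lhs => rw [hx]
  rw [Matrix.mulVec_smul, heig j, smul_smul, mul_comm (u j ⬝ᵥ x) (l j), ← smul_smul, ← hx]

lemma exists_orth (v w : Fin N → (Fin N → ℝ)) (s t : Finset (Fin N))
    (h : s.card + t.card < N) :
    ∃ x : Fin N → ℝ, x ≠ 0 ∧ (∀ k ∈ s, v k ⬝ᵥ x = 0) ∧ (∀ k ∈ t, w k ⬝ᵥ x = 0) := by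
  classical
  let Φ : (Fin N → ℝ) →ₗ[ℝ] (s → ℝ) × (t → ℝ) :=
    { toFun := fun x => (fun k => v k ⬝ᵥ x, fun k => w k ⬝ᵥ x)
      map_add' := by intro a b; refine Prod.ext ?_ ?_ <;> funext k <;>
        simp [dotProduct_add]
      map_smul' := by intro c a; refine Prod.ext ?_ ?_ <;> funext k <;>
        simp [dotProduct_smul] }
  have hni : ¬ Function.Injective Φ := by
    intro hinj
    have hle := LinearMap.finrank_le_finrank_of_injective (f := Φ) hinj
    rw [Module.finrank_fintype_fun_eq_card, Module.finrank_prod,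
      Module.finrank_fintype_fun_eq_card, Module.finrank_fintype_fun_eq_card,
      Fintype.card_coe, Fintype.card_coe, Fintype.card_fin] at hle
    omega
  rw [Function.not_injective_iff] at hni
  obtain ⟨a, b, hab, hne⟩ := hni
  refine ⟨a - b, sub_ne_zero_of_ne hne, ?_, ?_⟩
  · intro k hk
    have := congrArg (fun q => q.1 ⟨k, hk⟩) hab
    simp only [Φ, LinearMap.coe_mk, AddHom.coe_mk] at this
    rw [dotProduct_sub, this, sub_self]
  · intro k hk
    have := congrArg (fun q => q.2 ⟨k, hk⟩) hab
    simp only [Φ, LinearMap.coe_mk, AddHom.coe_mk] at this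
    rw [dotProduct_sub, this, sub_self]
end

/-- If `A` is symmetric with distinct eigenvalues whose minimum gap exceeds
`λ_max(BD⁻¹Bᵀ)`, `D ≻ 0`, and `Bᵀx ≠ 0` for every eigenvector `x` of `A`, then the
eigenvalues of `A` and of `A − BD⁻¹Bᵀ` strictly interlace, and those of
`A − BD⁻¹Bᵀ` are distinct. -/
theorem stmt18 (n m : ℕ) (A : Matrix (Fin (n + 1)) (Fin (n + 1)) ℝ)
    (B : Matrix (Fin (n + 1)) (Fin m) ℝ) (D : Matrix (Fin m) (Fin m) ℝ)
    (hA : A.IsSymm) (hD : D.PosDef)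
    (lA lM lZ : Fin (n + 1) → ℝ)
    (hlA : StrictMono lA) (hlM : Monotone lM) (hlZ : Monotone lZ)
    (hcA : A.charpoly = ∏ i, (X - Polynomial.C (lA i)))
    (hcM : (B * D⁻¹ * Bᵀ).charpoly = ∏ i, (X - Polynomial.C (lM i)))
    (hcZ : (A - B * D⁻¹ * Bᵀ).charpoly = ∏ i, (X - Polynomial.C (lZ i)))
    (hgap : ∀ i : Fin n, lM (Fin.last n) < lA i.succ - lA i.castSucc)
    (hctrl : ∀ (x : Fin (n + 1) → ℝ) (c : ℝ),
      x ≠ 0 → A.mulVec x = c • x → Bᵀ.mulVec x ≠ 0) :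
    (∀ i : Fin n, lZ i.castSucc < lA i.castSucc ∧ lA i.castSucc < lZ i.succ) ∧
      lZ (Fin.last n) < lA (Fin.last n) ∧ StrictMono lZ := by
  classical
  set M : Matrix (Fin (n + 1)) (Fin (n + 1)) ℝ := B * D⁻¹ * Bᵀ with hMdef
  have hDsymm : Dᵀ = D := by
    rw [← Matrix.conjTranspose_eq_transpose_of_trivial]; exact hD.1
  have hMsymm : M.IsSymm := by
    show Mᵀ = M
    rw [hMdef, Matrix.transpose_mul, Matrix.transpose_mul, Matrix.transpose_transpose,
      Matrix.transpose_nonsing_inv, hDsymm, Matrix.mul_assoc]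
  have hZsymm : (A - M).IsSymm := by
    show (A - M)ᵀ = A - M
    rw [Matrix.transpose_sub, hA.eq, hMsymm.eq]
  obtain ⟨uA, hAo, hAe, hAc⟩ := exists_eig A hA lA hcA
  obtain ⟨uM, hMo, hMe, hMc⟩ := exists_eig M hMsymm lM hcM
  obtain ⟨uZ, hZo, hZe, hZc⟩ := exists_eig (A - M) hZsymm lZ hcZ
  have hDinv : (D⁻¹).PosDef := hD.inv
  have hMform : ∀ x : Fin (n+1) → ℝ, x ⬝ᵥ (M *ᵥ x) = (Bᵀ *ᵥ x) ⬝ᵥ (D⁻¹ *ᵥ (Bᵀ *ᵥ x)) := by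
    intro x
    have h1 : M *ᵥ x = B *ᵥ (D⁻¹ *ᵥ (Bᵀ *ᵥ x)) := by
      rw [hMdef, Matrix.mulVec_mulVec, Matrix.mulVec_mulVec]
    rw [h1, Matrix.dotProduct_mulVec, ← Matrix.mulVec_transpose]
  have hMnn : ∀ x : Fin (n+1) → ℝ, 0 ≤ x ⬝ᵥ (M *ᵥ x) := by
    intro x
    rw [hMform]
    by_cases h : Bᵀ *ᵥ x = 0
    · rw [h]; simp
    · have h2 := hDinv.re_dotProduct_pos h
      simpa using h2.le
  have hMpos : ∀ (x : Fin (n+1) → ℝ) (c : ℝ), x ≠ 0 → A *ᵥ x = c • x →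
      0 < x ⬝ᵥ (M *ᵥ x) := by
    intro x c hx0 hex
    rw [hMform]
    have h2 := hDinv.re_dotProduct_pos (hctrl x c hx0 hex)
    simpa using h2
  have hxxpos : ∀ x : Fin (n+1) → ℝ, x ≠ 0 → 0 < x ⬝ᵥ x := by
    intro x hx0
    rcases (lt_or_eq_of_le (by
      rw [norm_expand hAc x]
      exact Finset.sum_nonneg fun k _ => sq_nonneg _ : (0:ℝ) ≤ x ⬝ᵥ x)) with h | h
    · exact h
    · exact absurd (dotProduct_self_eq_zero.mp h.symm) hx0
  -- Part 2 : strict upper bound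
  have upper : ∀ j : Fin (n+1), lZ j < lA j := by
    intro j
    obtain ⟨x, hx0, hxA, hxZ⟩ := exists_orth uA uZ (Finset.Ioi j) (Finset.Iio j) (by
      rw [Fin.card_Ioi, Fin.card_Iio]
      have := j.isLt; omega)
    have hZge : lZ j * (x ⬝ᵥ x) ≤ x ⬝ᵥ ((A - M) *ᵥ x) :=
      qform_ge hZsymm hZe hZc x (lZ j) (fun k => j ≤ k)
        (fun k hk => hlZ hk)
        (fun k hk => hxZ k (Finset.mem_Iio.mpr (lt_of_not_ge hk)))
    have hAle : x ⬝ᵥ (A *ᵥ x) ≤ lA j * (x ⬝ᵥ x) :=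
      qform_le hA hAe hAc x (lA j) (fun k => k ≤ j)
        (fun k hk => hlA.monotone hk)
        (fun k hk => hxA k (Finset.mem_Ioi.mpr (lt_of_not_ge hk)))
    have hsub : x ⬝ᵥ ((A - M) *ᵥ x) = x ⬝ᵥ (A *ᵥ x) - x ⬝ᵥ (M *ᵥ x) := by
      rw [Matrix.sub_mulVec, dotProduct_sub]
    have hxx := hxxpos x hx0
    have hMx := hMnn x
    have hle : lZ j ≤ lA j := by nlinarith
    rcases lt_or_eq_of_le hle with h | h
    · exact h
    · exfalso
      have hqM : x ⬝ᵥ (M *ᵥ x) = 0 := by nlinarith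
      have hqA : x ⬝ᵥ (A *ᵥ x) = lA j * (x ⬝ᵥ x) := by nlinarith
      have heig : A *ᵥ x = lA j • x := by
        refine qform_eq_eigen hA hAe hAc x j (fun k hk => ?_) hqA
        rcases lt_or_gt_of_ne hk with h1 | h1
        · exact Or.inr (hlA h1)
        · exact Or.inl (hxA k (Finset.mem_Ioi.mpr h1))
      have hpos := hMpos x (lA j) hx0 heig
      linarith
  -- Part 1 : lower bound via Weyl + gap
  have lower : ∀ i : Fin n, lA i.castSucc < lZ i.succ := by
    intro i
    set j := i.succ with hj
    obtain ⟨x, hx0, hxA, hxZ⟩ := exists_orth uA uZ (Finset.Iio j) (Finset.Ioi j) (by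
      rw [Fin.card_Ioi, Fin.card_Iio]
      have := j.isLt; omega)
    have hAge : lA j * (x ⬝ᵥ x) ≤ x ⬝ᵥ (A *ᵥ x) :=
      qform_ge hA hAe hAc x (lA j) (fun k => j ≤ k)
        (fun k hk => hlA.monotone hk)
        (fun k hk => hxA k (Finset.mem_Iio.mpr (lt_of_not_ge hk)))
    have hZle : x ⬝ᵥ ((A - M) *ᵥ x) ≤ lZ j * (x ⬝ᵥ x) :=
      qform_le hZsymm hZe hZc x (lZ j) (fun k => k ≤ j)
        (fun k hk => hlZ hk)
        (fun k hk => hxZ k (Finset.mem_Ioi.mpr (lt_of_not_ge hk)))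
    have hMle : x ⬝ᵥ (M *ᵥ x) ≤ lM (Fin.last n) * (x ⬝ᵥ x) :=
      qform_le hMsymm hMe hMc x (lM (Fin.last n)) (fun _ => True)
        (fun k _ => hlM (Fin.le_last k))
        (fun k hk => absurd trivial hk)
    have hsub : x ⬝ᵥ ((A - M) *ᵥ x) = x ⬝ᵥ (A *ᵥ x) - x ⬝ᵥ (M *ᵥ x) := by
      rw [Matrix.sub_mulVec, dotProduct_sub]
    have hxx := hxxpos x hx0
    have hgap' := hgap i
    nlinarith
  refine ⟨fun i => ⟨upper i.castSucc, lower i⟩, upper (Fin.last n), ?_⟩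
  exact Fin.strictMono_iff_lt_succ.mpr fun i => lt_trans (upper i.castSucc) (lower i)
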